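/- Let p and B be positive integers, let L ≥ μ > 0, σ ≥ 0 and c ≥ 4 be real numbers, and set κ = L/μ. Let E be a positive integer, τ_1, …, τ_E positive integers, T = ∑_{i=1}^E τ_i, s_i = ∑_{l<i} τ_l, and for 0 ≤ t < T let i(t) be the unique index with s_{i(t)} ≤ t < s_{i(t)} + τ_{i(t)} and s(t) = s_{i(t)}. For a nonnegative integer t set η_t = 4/(μ(t + c)) and A_t = (η_t L σ²/(pB)) · ( η_t/2 + (L(p+1)/p)·∑_{k=s(t)+1}^{t−1} η_k² ). Suppose ζ : ℕ → ℝ is nonnegative and satisfies ζ(t+1) ≤ (1 − μη_t)·ζ(t) + A_t for all 0 ≤ t ≤ T−1. Then ζ(T) ≤ (c³/(T + c − 1)³)·ζ(0) + 4κσ²T(T + 2c)/(μpB(T + c − 1)³) + (64κ²σ²(p+1)/(μp²B(T + c − 1)³)) · ∑_{i=1}^E (τ_i − 1)·[ τ_i + τ_i(τ_i−1)/c + τ_i(τ_i−1)(2τ_i−1)/(6c²) ]. -/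

import Mathlib

open scoped BigOperators


lemma sumQ (c : ℝ) (hc : c ≠ 0) (n : ℕ) :
    ∑ m ∈ Finset.range n, (1 + (m : ℝ) / c) ^ 2
      = (n : ℝ) + (n : ℝ) * ((n : ℝ) - 1) / c
        + (n : ℝ) * ((n : ℝ) - 1) * (2 * (n : ℝ) - 1) / (6 * c ^ 2) := by
  induction n with
  | zero => simp
  | succ n ih =>
    rw [Finset.sum_range_succ, ih]
    push_cast
    field_simp
    ring

lemma gauss_le (c : ℝ) (hc : 0 ≤ c) (n : ℕ) :
    ∑ t ∈ Finset.range n, ((t : ℝ) + c) ≤ (n : ℝ) * ((n : ℝ) + 2 * c) / 2 := by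
  induction n with
  | zero => simp
  | succ n ih =>
    rw [Finset.sum_range_succ]
    push_cast
    nlinarith [ih]

lemma block_split (τ : ℕ → ℕ) (s : ℕ → ℕ) (hs : ∀ i, s i = ∑ l ∈ Finset.range i, τ l)
    (f : ℕ → ℝ) (E : ℕ) :
    ∑ t ∈ Finset.range (s E), f t
      = ∑ i ∈ Finset.range E, ∑ t ∈ Finset.Ico (s i) (s i + τ i), f t := by
  induction E with
  | zero => simp [hs]
  | succ n ih =>
    have h1 : s (n + 1) = s n + τ n := by simp [hs, Finset.sum_range_succ]
    rw [Finset.sum_range_succ, ← ih, ← h1, Finset.range_eq_Ico, Finset.range_eq_Ico]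
    exact (Finset.sum_Ico_consecutive f (Nat.zero_le (s n)) (by omega : s n ≤ s (n+1))).symm


lemma ptwise (c : ℝ) (hc : 0 < c) (t k : ℕ) (hkt : k ≤ t) :
    ((t : ℝ) + c) ^ 2 * (1 / ((k : ℝ) + c) ^ 2) ≤ (1 + ((t - k : ℕ) : ℝ) / c) ^ 2 := by
  have hk : (0:ℝ) < (k:ℝ) + c := by positivity
  have hcast : ((t - k : ℕ) : ℝ) = (t:ℝ) - (k:ℝ) := by
    push_cast [Nat.cast_sub hkt]; ring
  rw [hcast]
  have h1 : ((t:ℝ) + c) / ((k:ℝ) + c) ≤ 1 + ((t:ℝ) - (k:ℝ)) / c := by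
    rw [div_le_iff₀ hk]
    have htk : (0:ℝ) ≤ (t:ℝ) - (k:ℝ) := by
      exact sub_nonneg.mpr (Nat.cast_le.mpr hkt)
    have hk0 : (0:ℝ) ≤ (k:ℝ) := Nat.cast_nonneg k
    have expand : (1 + ((t:ℝ) - k) / c) * ((k:ℝ) + c)
        = (k:ℝ) + c + ((t:ℝ) - k) + ((t:ℝ) - k) * k / c := by
      field_simp; ring
    rw [expand]
    have : (0:ℝ) ≤ ((t:ℝ) - k) * k / c := by positivity
    linarith
  have h2 : (0:ℝ) ≤ ((t:ℝ) + c) / ((k:ℝ) + c) := by positivity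
  calc ((t : ℝ) + c) ^ 2 * (1 / ((k : ℝ) + c) ^ 2)
      = (((t:ℝ) + c) / ((k:ℝ) + c)) ^ 2 := by rw [div_pow]; ring
    _ ≤ (1 + ((t:ℝ) - (k:ℝ)) / c) ^ 2 := by
        apply pow_le_pow_left₀ h2 h1

lemma inner_bound (c : ℝ) (hc : 0 < c) (sv τi t : ℕ) (ht1 : sv ≤ t) (ht2 : t < sv + τi) :
    ((t : ℝ) + c) ^ 2 * ∑ k ∈ Finset.Ico (sv + 1) t, 1 / ((k : ℝ) + c) ^ 2
      ≤ ∑ m ∈ Finset.range τi, (1 + (m : ℝ) / c) ^ 2 := by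
  rw [Finset.mul_sum]
  have step1 : ∑ k ∈ Finset.Ico (sv + 1) t, ((t : ℝ) + c) ^ 2 * (1 / ((k : ℝ) + c) ^ 2)
      ≤ ∑ k ∈ Finset.Ico (sv + 1) t, (1 + ((t - k : ℕ) : ℝ) / c) ^ 2 := by
    apply Finset.sum_le_sum
    intro k hk
    exact ptwise c hc t k (le_of_lt (Finset.mem_Ico.mp hk).2)
  have step2 : ∑ k ∈ Finset.Ico (sv + 1) t, (1 + ((t - k : ℕ) : ℝ) / c) ^ 2
      = ∑ m ∈ (Finset.Ico (sv + 1) t).image (t - ·), (1 + (m : ℝ) / c) ^ 2 := by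
    rw [Finset.sum_image]
    intro a ha b hb hab
    have ha' := Finset.mem_Ico.mp ha
    have hb' := Finset.mem_Ico.mp hb
    simp only at hab
    omega
  have step3 : ∑ m ∈ (Finset.Ico (sv + 1) t).image (t - ·), (1 + (m : ℝ) / c) ^ 2
      ≤ ∑ m ∈ Finset.range τi, (1 + (m : ℝ) / c) ^ 2 := by
    apply Finset.sum_le_sum_of_subset_of_nonneg
    · intro m hm
      simp only [Finset.mem_image, Finset.mem_Ico] at hm
      obtain ⟨k, ⟨hk1, hk2⟩, rfl⟩ := hm
      simp only [Finset.mem_range]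
      omega
    · intro m _ _; positivity
  calc _ ≤ _ := step1
    _ = _ := step2
    _ ≤ _ := step3

lemma block_bound (c : ℝ) (hc : 0 < c) (sv τi : ℕ) (hτi : 0 < τi) :
    ∑ t ∈ Finset.Ico sv (sv + τi),
        ((t : ℝ) + c) ^ 2 * ∑ k ∈ Finset.Ico (sv + 1) t, 1 / ((k : ℝ) + c) ^ 2
      ≤ ((τi : ℝ) - 1) * ∑ m ∈ Finset.range τi, (1 + (m : ℝ) / c) ^ 2 := by
  have hsplit : Finset.Ico sv (sv + τi) = insert sv (Finset.Ico (sv + 1) (sv + τi)) := by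
    exact (Finset.insert_Ico_add_one_left_eq_Ico (by omega : sv < sv + τi)).symm
  rw [hsplit, Finset.sum_insert (by simp)]
  have h0 : ((sv : ℝ) + c) ^ 2 * ∑ k ∈ Finset.Ico (sv + 1) sv, 1 / ((k : ℝ) + c) ^ 2 = 0 := by
    rw [Finset.Ico_eq_empty (by omega)]; simp
  rw [h0, zero_add]
  have hQ : (0:ℝ) ≤ ∑ m ∈ Finset.range τi, (1 + (m : ℝ) / c) ^ 2 := by positivity
  have hcard : ((Finset.Ico (sv + 1) (sv + τi)).card : ℝ) = (τi : ℝ) - 1 := by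
    rw [Nat.card_Ico]
    have : sv + τi - (sv + 1) = τi - 1 := by omega
    rw [this]
    push_cast [Nat.cast_sub hτi]
    ring
  calc ∑ t ∈ Finset.Ico (sv + 1) (sv + τi),
        ((t : ℝ) + c) ^ 2 * ∑ k ∈ Finset.Ico (sv + 1) t, 1 / ((k : ℝ) + c) ^ 2
      ≤ ∑ _t ∈ Finset.Ico (sv + 1) (sv + τi), ∑ m ∈ Finset.range τi, (1 + (m : ℝ) / c) ^ 2 := by
        apply Finset.sum_le_sum
        intro t ht
        have ht' := Finset.mem_Ico.mp ht
        exact inner_bound c hc sv τi t (by omega) ht'.2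
    _ = ((Finset.Ico (sv + 1) (sv + τi)).card : ℝ) * ∑ m ∈ Finset.range τi, (1 + (m : ℝ) / c) ^ 2 := by
        rw [Finset.sum_const, nsmul_eq_mul]
    _ = ((τi : ℝ) - 1) * ∑ m ∈ Finset.range τi, (1 + (m : ℝ) / c) ^ 2 := by rw [hcard]


lemma recur_bound (μ c : ℝ) (hμ : 0 < μ) (hc : 4 ≤ c)
    (η A ζ : ℕ → ℝ) (hη : ∀ t : ℕ, η t = 4 / (μ * ((t : ℝ) + c)))
    (hζ : ∀ t : ℕ, 0 ≤ ζ t) (T : ℕ)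
    (hrec : ∀ t : ℕ, t < T → ζ (t + 1) ≤ (1 - μ * η t) * ζ t + A t) :
    ∀ n ≤ T, ((n : ℝ) + c - 1) ^ 3 * ζ n
      ≤ (c - 1) ^ 3 * ζ 0 + ∑ t ∈ Finset.range n, ((t : ℝ) + c) ^ 3 * A t := by
  intro n hn
  induction n with
  | zero => simp
  | succ n ih =>
    have hnT : n < T := by omega
    have ih' := ih (by omega)
    have hnc : (0:ℝ) < (n : ℝ) + c := by positivity
    have hmuη : μ * η n = 4 / ((n : ℝ) + c) := by
      rw [hη]; field_simp
    have h1 := hrec n hnT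
    have hcast : ((n + 1 : ℕ) : ℝ) + c - 1 = (n : ℝ) + c := by push_cast; ring
    rw [Finset.sum_range_succ, hcast]
    have hfac : (1 - μ * η n) = ((n : ℝ) + c - 4) / ((n : ℝ) + c) := by
      rw [hmuη]; field_simp
    have step1 : ((n : ℝ) + c) ^ 3 * ζ (n + 1)
        ≤ ((n : ℝ) + c) ^ 3 * ((1 - μ * η n) * ζ n + A n) := by
      apply mul_le_mul_of_nonneg_left h1 (by positivity)
    have step2 : ((n : ℝ) + c) ^ 3 * ((1 - μ * η n) * ζ n + A n)
        = ((n : ℝ) + c) ^ 2 * ((n : ℝ) + c - 4) * ζ n + ((n : ℝ) + c) ^ 3 * A n := by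
      rw [hfac]; field_simp
    have step3 : ((n : ℝ) + c) ^ 2 * ((n : ℝ) + c - 4) * ζ n
        ≤ ((n : ℝ) + c - 1) ^ 3 * ζ n := by
      apply mul_le_mul_of_nonneg_right _ (hζ n)
      nlinarith [hnc]
    linarith [step1, step2, step3, ih']


lemma A_formula (p B : ℕ) (hp : 0 < p) (hB : 0 < B)
    (L μ σ c : ℝ) (hμ : 0 < μ) (hc : 0 < c)
    (st : ℕ → ℕ) (η : ℕ → ℝ) (hη : ∀ t : ℕ, η t = 4 / (μ * ((t : ℝ) + c)))
    (A : ℕ → ℝ)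
    (hA : ∀ t : ℕ, A t = (η t * L * σ ^ 2 / ((p : ℝ) * B)) *
      (η t / 2 + (L * ((p : ℝ) + 1) / p) * ∑ k ∈ Finset.Ico (st t + 1) t, η k ^ 2))
    (t : ℕ) :
    ((t : ℝ) + c) ^ 3 * A t
      = 8 * L * σ ^ 2 / (μ ^ 2 * p * B) * ((t : ℝ) + c)
        + 64 * L ^ 2 * σ ^ 2 * ((p : ℝ) + 1) / (μ ^ 3 * (p : ℝ) ^ 2 * B) *
            (((t : ℝ) + c) ^ 2 * ∑ k ∈ Finset.Ico (st t + 1) t, 1 / ((k : ℝ) + c) ^ 2) := by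
  have hp' : (0:ℝ) < p := by exact_mod_cast hp
  have hB' : (0:ℝ) < B := by exact_mod_cast hB
  have htc : (0:ℝ) < (t : ℝ) + c := by positivity
  have hsum : ∑ k ∈ Finset.Ico (st t + 1) t, η k ^ 2
      = 16 / μ ^ 2 * ∑ k ∈ Finset.Ico (st t + 1) t, 1 / ((k : ℝ) + c) ^ 2 := by
    rw [Finset.mul_sum]
    apply Finset.sum_congr rfl
    intro k _
    have hkc : (0:ℝ) < (k : ℝ) + c := by positivity
    rw [hη]
    field_simp
    ring
  rw [hA, hη, hsum]
  field_simp
  ring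

/-- Analytic core of the convergence theorem for adaptive local SGD
(ADA-LUPA-SGD): a nonnegative sequence `ζ` satisfying the per-iteration recursion
`ζ(t+1) ≤ (1 − μη_t)ζ(t) + A_t`, with learning rate `η t = 4/(μ(t+c))`, communication
schedule `τ_1, …, τ_E`, synchronization times `s i = ∑_{l<i} τ_l`, `st t` the most
recent synchronization time before iteration `t`, and noise term `A_t` accumulating
the variance contributions since `st t`, obeys the stated convergence bound. -/
theorem ada_lupa_convergence
    (p B : ℕ) (hp : 0 < p) (hB : 0 < B)
    (L μ σ c : ℝ) (hμ : 0 < μ) (hLμ : μ ≤ L) (hσ : 0 ≤ σ) (hc : 4 ≤ c)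
    (κ : ℝ) (hκ : κ = L / μ)
    (E : ℕ) (hE : 0 < E) (τ : ℕ → ℕ) (hτ : ∀ i < E, 0 < τ i)
    (T : ℕ) (hT : T = ∑ i ∈ Finset.range E, τ i)
    (s : ℕ → ℕ) (hs : ∀ i, s i = ∑ l ∈ Finset.range i, τ l)
    (st : ℕ → ℕ)
    (hst : ∀ i < E, ∀ t : ℕ, s i ≤ t → t < s i + τ i → st t = s i)
    (η : ℕ → ℝ) (hη : ∀ t : ℕ, η t = 4 / (μ * ((t : ℝ) + c)))
    (A : ℕ → ℝ)
    (hA : ∀ t : ℕ, A t = (η t * L * σ ^ 2 / ((p : ℝ) * B)) *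
      (η t / 2 + (L * ((p : ℝ) + 1) / p) * ∑ k ∈ Finset.Ico (st t + 1) t, η k ^ 2))
    (ζ : ℕ → ℝ) (hζ : ∀ t : ℕ, 0 ≤ ζ t)
    (hrec : ∀ t : ℕ, t < T → ζ (t + 1) ≤ (1 - μ * η t) * ζ t + A t) :
    ζ T ≤ (c ^ 3 / ((T : ℝ) + c - 1) ^ 3) * ζ 0
      + 4 * κ * σ ^ 2 * T * ((T : ℝ) + 2 * c) / (μ * p * B * ((T : ℝ) + c - 1) ^ 3)
      + (64 * κ ^ 2 * σ ^ 2 * ((p : ℝ) + 1)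
          / (μ * (p : ℝ) ^ 2 * B * ((T : ℝ) + c - 1) ^ 3)) *
        ∑ i ∈ Finset.range E, ((τ i : ℝ) - 1) *
          ((τ i : ℝ) + (τ i : ℝ) * ((τ i : ℝ) - 1) / c
            + (τ i : ℝ) * ((τ i : ℝ) - 1) * (2 * (τ i : ℝ) - 1) / (6 * c ^ 2)) := by
  have hc0 : (0:ℝ) < c := by linarith
  have hc1 : c ≠ 0 := ne_of_gt hc0
  have hL : (0:ℝ) < L := lt_of_lt_of_le hμ hLμ
  have hp' : (0:ℝ) < p := by exact_mod_cast hp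
  have hB' : (0:ℝ) < B := by exact_mod_cast hB
  have hTc : (0:ℝ) < (T : ℝ) + c - 1 := by
    have : (0:ℝ) ≤ (T:ℝ) := Nat.cast_nonneg T
    linarith
  have hD : (0:ℝ) < ((T : ℝ) + c - 1) ^ 3 := by positivity
  have hsE : s E = T := by rw [hs, hT]
  -- abbreviations
  set C1 : ℝ := 8 * L * σ ^ 2 / (μ ^ 2 * p * B) with hC1
  set C2 : ℝ := 64 * L ^ 2 * σ ^ 2 * ((p : ℝ) + 1) / (μ ^ 3 * (p : ℝ) ^ 2 * B) with hC2
  have hC1pos : 0 ≤ C1 := by rw [hC1]; positivity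
  have hC2pos : 0 ≤ C2 := by rw [hC2]; positivity
  -- the weighted recursion
  have key := recur_bound μ c hμ hc η A ζ hη hζ T hrec T le_rfl
  -- decompose the noise sum
  have hsum_eq : ∑ t ∈ Finset.range T, ((t : ℝ) + c) ^ 3 * A t
      = C1 * (∑ t ∈ Finset.range T, ((t : ℝ) + c))
        + C2 * (∑ t ∈ Finset.range T,
            ((t : ℝ) + c) ^ 2 * ∑ k ∈ Finset.Ico (st t + 1) t, 1 / ((k : ℝ) + c) ^ 2) := by
    rw [Finset.mul_sum, Finset.mul_sum, ← Finset.sum_add_distrib]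
    exact Finset.sum_congr rfl fun t _ =>
      A_formula p B hp hB L μ σ c hμ hc0 st η hη A hA t
  -- bound the linear part
  have hlin : ∑ t ∈ Finset.range T, ((t : ℝ) + c) ≤ (T : ℝ) * ((T : ℝ) + 2 * c) / 2 :=
    gauss_le c (le_of_lt hc0) T
  -- bound the block part
  have hblk : ∑ t ∈ Finset.range T,
        ((t : ℝ) + c) ^ 2 * ∑ k ∈ Finset.Ico (st t + 1) t, 1 / ((k : ℝ) + c) ^ 2
      ≤ ∑ i ∈ Finset.range E, ((τ i : ℝ) - 1) *
          ∑ m ∈ Finset.range (τ i), (1 + (m : ℝ) / c) ^ 2 := by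
    rw [← hsE, block_split τ s hs _ E]
    apply Finset.sum_le_sum
    intro i hi
    have hiE : i < E := Finset.mem_range.mp hi
    have hinner : ∑ t ∈ Finset.Ico (s i) (s i + τ i),
          ((t : ℝ) + c) ^ 2 * ∑ k ∈ Finset.Ico (st t + 1) t, 1 / ((k : ℝ) + c) ^ 2
        = ∑ t ∈ Finset.Ico (s i) (s i + τ i),
          ((t : ℝ) + c) ^ 2 * ∑ k ∈ Finset.Ico (s i + 1) t, 1 / ((k : ℝ) + c) ^ 2 := by
      apply Finset.sum_congr rfl
      intro t ht
      have ht' := Finset.mem_Ico.mp ht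
      rw [hst i hiE t ht'.1 ht'.2]
    rw [hinner]
    exact block_bound c hc0 (s i) (τ i) (hτ i hiE)
  -- rewrite the Q sums via the closed-form formula
  have hQform : ∑ i ∈ Finset.range E, ((τ i : ℝ) - 1) *
        ∑ m ∈ Finset.range (τ i), (1 + (m : ℝ) / c) ^ 2
      = ∑ i ∈ Finset.range E, ((τ i : ℝ) - 1) *
          ((τ i : ℝ) + (τ i : ℝ) * ((τ i : ℝ) - 1) / c
            + (τ i : ℝ) * ((τ i : ℝ) - 1) * (2 * (τ i : ℝ) - 1) / (6 * c ^ 2)) := by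
    exact Finset.sum_congr rfl fun i _ => by rw [sumQ c hc1 (τ i)]
  set P : ℝ := ∑ i ∈ Finset.range E, ((τ i : ℝ) - 1) *
      ((τ i : ℝ) + (τ i : ℝ) * ((τ i : ℝ) - 1) / c
        + (τ i : ℝ) * ((τ i : ℝ) - 1) * (2 * (τ i : ℝ) - 1) / (6 * c ^ 2)) with hP
  -- the goal RHS as a single fraction
  have hRHS : (c ^ 3 / ((T : ℝ) + c - 1) ^ 3) * ζ 0
      + 4 * κ * σ ^ 2 * T * ((T : ℝ) + 2 * c) / (μ * p * B * ((T : ℝ) + c - 1) ^ 3)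
      + (64 * κ ^ 2 * σ ^ 2 * ((p : ℝ) + 1)
          / (μ * (p : ℝ) ^ 2 * B * ((T : ℝ) + c - 1) ^ 3)) * P
      = (c ^ 3 * ζ 0 + C1 * ((T : ℝ) * ((T : ℝ) + 2 * c) / 2) + C2 * P)
          / ((T : ℝ) + c - 1) ^ 3 := by
    rw [hκ, hC1, hC2]
    field_simp
    ring
  rw [hRHS, le_div_iff₀ hD]
  have h1 : C1 * (∑ t ∈ Finset.range T, ((t : ℝ) + c))
      ≤ C1 * ((T : ℝ) * ((T : ℝ) + 2 * c) / 2) := mul_le_mul_of_nonneg_left hlin hC1pos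
  have h2 : C2 * (∑ t ∈ Finset.range T,
        ((t : ℝ) + c) ^ 2 * ∑ k ∈ Finset.Ico (st t + 1) t, 1 / ((k : ℝ) + c) ^ 2)
      ≤ C2 * P := by
    have h := mul_le_mul_of_nonneg_left hblk hC2pos
    rwa [hQform] at h
  have h3 : (c - 1) ^ 3 * ζ 0 ≤ c ^ 3 * ζ 0 := by
    apply mul_le_mul_of_nonneg_right _ (hζ 0)
    nlinarith
  calc ζ T * ((T : ℝ) + c - 1) ^ 3 = ((T : ℝ) + c - 1) ^ 3 * ζ T := by ring
    _ ≤ (c - 1) ^ 3 * ζ 0 + ∑ t ∈ Finset.range T, ((t : ℝ) + c) ^ 3 * A t := key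
    _ ≤ c ^ 3 * ζ 0 + C1 * ((T : ℝ) * ((T : ℝ) + 2 * c) / 2) + C2 * P := by
        rw [hsum_eq] at *
        linarith [h1, h2, h3]
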